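/- Let u : [0,∞) → [0,∞) be a convex, increasing, twice continuously differentiable function such that lim_{x→+∞} (u(x+1) − u(x))/x = 0 and there is a constant C > 0 with u''(x) ≤ C/x for all x ≥ 1. Then for every ε ∈ (0, C) there exists a constant Q_ε such that for all y ≥ 1 and all x ≥ 1, u(x+y) − u(x) − ε·x < u(y) + (C·ln(2C/ε) + 5C/4)·y + Q_ε. -/

import Mathlib

open Filter

/-- Algebraic core inequality. -/
lemma stmt_2_alg (C ε x y : ℝ) (hC : 0 < C) (hε0 : 0 < ε) (hεC : ε < C)
    (hx : 1 ≤ x) (hy : 1 ≤ y) :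
    C * (((x + y) * Real.log (x + y) - (x + 1) * Real.log (x + 1) - (x + y) + (x + 1))
      - (y * Real.log y - 1 * Real.log 1 - y + 1)) ≤
      ε / 2 * x + (C * Real.log (2 * C / ε) + C / 2) * y := by
  have hx0 : (0:ℝ) < x := by linarith
  have hy0 : (0:ℝ) < y := by linarith
  have hxy0 : (0:ℝ) < x + y := by linarith
  set a := Real.log (x + y) with ha
  set b := Real.log x with hb
  set c := Real.log y with hc
  set d := Real.log (x + 1) with hd
  set e := Real.log (2 * C / ε) with he
  -- hf1 : x * a ≤ x * b + y
  have hf1 : x * a ≤ x * b + y := by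
    have h1 : Real.log ((x + y) / x) ≤ (x + y) / x - 1 :=
      Real.log_le_sub_one_of_pos (by positivity)
    rw [Real.log_div hxy0.ne' hx0.ne'] at h1
    have h2 := mul_le_mul_of_nonneg_left h1 hx0.le
    have h3 : x * ((x + y) / x - 1) = y := by field_simp; ring
    rw [h3] at h2
    nlinarith [h2]
  -- hf2 : 2*C*y*a ≤ 2*C*y*c + ε*(x+y) + (2*C*(e-1))*y
  have hf2 : 2 * C * y * a ≤ 2 * C * y * c + ε * (x + y) + 2 * C * (e - 1) * y := by
    have hz0 : (0:ℝ) < ε * (x + y) / (2 * C * y) := by positivity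
    have h1 := Real.log_le_sub_one_of_pos hz0
    have heq : Real.log (ε * (x + y) / (2 * C * y)) = a - c - e := by
      rw [show ε * (x + y) / (2 * C * y) = ((x + y) / y) / (2 * C / ε) by
        field_simp]
      rw [Real.log_div (by positivity) (by positivity),
        Real.log_div hxy0.ne' hy0.ne']
    rw [heq] at h1
    have h2 := mul_le_mul_of_nonneg_left h1 (by positivity : (0:ℝ) ≤ 2 * C * y)
    have h3 : 2 * C * y * (ε * (x + y) / (2 * C * y) - 1) = ε * (x + y) - 2 * C * y := by
      field_simp
    rw [h3] at h2
    nlinarith [h2]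
  -- hf3 : x * b ≤ (x+1) * d
  have hf3 : x * b ≤ (x + 1) * d := by
    have hb0 : 0 ≤ b := Real.log_nonneg hx
    have hbd : b ≤ d := Real.log_le_log hx0 (by linarith)
    nlinarith [hb0, hbd]
  rw [Real.log_one]
  nlinarith [mul_le_mul_of_nonneg_left hf1 hC.le, hf2,
    mul_le_mul_of_nonneg_left hf3 hC.le, mul_le_mul_of_nonneg_right hεC.le hy0.le]

theorem stmt_2 (u : ℝ → ℝ) (C : ℝ) (hC : 0 < C)
    (hnonneg : ∀ x ∈ Set.Ici (0 : ℝ), 0 ≤ u x)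
    (hconv : ConvexOn ℝ (Set.Ici 0) u)
    (hmono : MonotoneOn u (Set.Ici 0))
    (hsmooth : ContDiffOn ℝ 2 u (Set.Ici 0))
    (hlim : Tendsto (fun x : ℝ => (u (x + 1) - u x) / x) atTop (nhds 0))
    (hsecond : ∀ x : ℝ, 1 ≤ x → deriv (deriv u) x ≤ C / x) :
    ∀ ε : ℝ, ε ∈ Set.Ioo 0 C → ∃ Q : ℝ, ∀ y : ℝ, 1 ≤ y → ∀ x : ℝ, 1 ≤ x →
      u (x + y) - u x - ε * x < u y + (C * Real.log (2 * C / ε) + 5 * C / 4) * y + Q := by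
  intro ε hε
  obtain ⟨hε0, hεC⟩ := hε
  set v := deriv u with hv_def
  set w := deriv (deriv u) with hw_def
  have hu2 : ContDiffOn ℝ 2 u (Set.Ioi 0) := hsmooth.mono Set.Ioi_subset_Ici_self
  have hv1 : ContDiffOn ℝ 1 v (Set.Ioi 0) := by
    have := hu2.deriv_of_isOpen isOpen_Ioi (m := 1) (by norm_num)
    exact this
  have hud : ∀ t : ℝ, 0 < t → HasDerivAt u (v t) t := by
    intro t ht
    exact ((hu2.contDiffAt (Ioi_mem_nhds ht)).differentiableAt (by norm_num)).hasDerivAt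
  have hvd : ∀ t : ℝ, 0 < t → HasDerivAt v (w t) t := by
    intro t ht
    exact ((hv1.contDiffAt (Ioi_mem_nhds ht)).differentiableAt (by norm_num)).hasDerivAt
  have hvc : ContinuousOn v (Set.Ioi 0) := hv1.continuousOn
  have hwc : ContinuousOn w (Set.Ioi 0) :=
    hv1.continuousOn_deriv_of_isOpen isOpen_Ioi le_rfl
  -- FTC for u
  have hftc_u : ∀ a b : ℝ, 0 < a → a ≤ b → u b - u a = ∫ t in a..b, v t := by
    intro a b ha hab
    symm
    apply intervalIntegral.integral_eq_sub_of_hasDerivAt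
    · intro t ht
      rw [Set.uIcc_of_le hab] at ht
      exact hud t (lt_of_lt_of_le ha ht.1)
    · apply ContinuousOn.intervalIntegrable
      apply hvc.mono
      rw [Set.uIcc_of_le hab]
      intro t ht
      exact lt_of_lt_of_le ha ht.1
  -- bound on the increments of v
  have hvbound : ∀ a b : ℝ, 1 ≤ a → a ≤ b →
      v b - v a ≤ C * (Real.log b - Real.log a) := by
    intro a b ha hab
    have ha0 : (0:ℝ) < a := lt_of_lt_of_le one_pos ha
    have hb0 : (0:ℝ) < b := lt_of_lt_of_le ha0 hab
    have hsub : Set.uIcc a b ⊆ Set.Ioi 0 := by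
      rw [Set.uIcc_of_le hab]
      intro t ht
      exact lt_of_lt_of_le ha0 ht.1
    have h1 : v b - v a = ∫ t in a..b, w t := by
      symm
      apply intervalIntegral.integral_eq_sub_of_hasDerivAt
      · intro t ht
        exact hvd t (hsub ht)
      · exact (hwc.mono hsub).intervalIntegrable
    have h2 : (∫ t in a..b, w t) ≤ ∫ t in a..b, C * t⁻¹ := by
      apply intervalIntegral.integral_mono_on hab
      · exact (hwc.mono hsub).intervalIntegrable
      · apply ContinuousOn.intervalIntegrable
        exact continuousOn_const.mul ((continuousOn_inv₀).mono (by
          intro t ht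
          exact ne_of_gt (hsub ht)))
      · intro t ht
        have ht1 : 1 ≤ t := le_trans ha ht.1
        have := hsecond t ht1
        rwa [div_eq_mul_inv] at this
    have h3 : (∫ t in a..b, C * t⁻¹) = C * (Real.log b - Real.log a) := by
      rw [intervalIntegral.integral_const_mul, integral_inv
        (Set.notMem_subset hsub (by simp)), Real.log_div hb0.ne' ha0.ne']
    linarith [h1 ▸ h2, h3 ▸ h2]
  -- control of u(x+1) - u(x) from the limit hypothesis
  obtain ⟨X, hX⟩ := (Filter.eventually_atTop.mp
    (hlim.eventually (eventually_lt_nhds (by positivity : (0:ℝ) < ε / 2))))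
  set X' := max X 1 with hX'_def
  set M := u (X' + 1) with hM_def
  have hM0 : 0 ≤ M := hnonneg _ (by simp [hX'_def]; positivity)
  have key2 : ∀ x : ℝ, 1 ≤ x → u (x + 1) - u x ≤ ε / 2 * x + M := by
    intro x hx
    have hx0 : (0:ℝ) < x := lt_of_lt_of_le one_pos hx
    by_cases hxX : X' ≤ x
    · have h1 := hX x (le_trans (le_max_left X 1) hxX)
      have h2 : u (x + 1) - u x < ε / 2 * x := by
        rw [div_lt_iff₀ hx0] at h1
        linarith [h1]
      linarith
    · push_neg at hxX
      have h1 : u (x + 1) ≤ M := by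
        apply hmono (by simp; linarith) (by simp [hX'_def]; positivity)
        linarith
      have h2 : 0 ≤ u x := hnonneg x (by simp; linarith)
      nlinarith
  refine ⟨M - u 1 + 1, ?_⟩
  intro y hy x hx
  have hx0 : (0:ℝ) < x := lt_of_lt_of_le one_pos hx
  have hy0 : (0:ℝ) < y := lt_of_lt_of_le one_pos hy
  -- FTC for the shifted function
  have hIccsub : Set.uIcc 1 y ⊆ Set.Icc 1 y := by rw [Set.uIcc_of_le hy]
  have e1 : u (x + y) - u (x + 1) = ∫ t in (1:ℝ)..y, v (x + t) := by
    symm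
    apply intervalIntegral.integral_eq_sub_of_hasDerivAt
      (f := fun t => u (x + t))
    · intro t ht
      have ht1 : 1 ≤ t := (hIccsub ht).1
      exact (hud (x + t) (by linarith)).comp_const_add x t
    · apply ContinuousOn.intervalIntegrable
      apply (hvc.comp (continuous_const.add continuous_id).continuousOn)
      intro t ht
      have ht1 : 1 ≤ t := (hIccsub ht).1
      exact Set.mem_Ioi.mpr (by simp; linarith)
  have e2 : u y - u 1 = ∫ t in (1:ℝ)..y, v t := hftc_u 1 y one_pos hy
  have hint1 : IntervalIntegrable (fun t => v (x + t)) MeasureTheory.volume 1 y := by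
    apply ContinuousOn.intervalIntegrable
    apply (hvc.comp (continuous_const.add continuous_id).continuousOn)
    intro t ht
    have ht1 : 1 ≤ t := (hIccsub ht).1
    exact Set.mem_Ioi.mpr (by simp; linarith)
  have hint2 : IntervalIntegrable v MeasureTheory.volume 1 y := by
    apply ContinuousOn.intervalIntegrable
    apply hvc.mono
    intro t ht
    exact lt_of_lt_of_le one_pos (hIccsub ht).1
  have hlogc : ∀ cc : ℝ, 0 ≤ cc →
      ContinuousOn (fun t : ℝ => Real.log (cc + t)) (Set.uIcc 1 y) := by
    intro cc hcc t ht
    have ht1 : 1 ≤ t := (hIccsub ht).1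
    have h0 : cc + t ≠ 0 := by positivity
    exact ((Real.continuousAt_log h0).comp
      (continuous_const.add continuous_id).continuousAt).continuousWithinAt
  have hintA : IntervalIntegrable (fun t => Real.log (x + t))
      MeasureTheory.volume 1 y := (hlogc x hx0.le).intervalIntegrable
  have hintB : IntervalIntegrable (fun t => Real.log t)
      MeasureTheory.volume 1 y := by
    have := (hlogc 0 le_rfl)
    simp only [zero_add] at this
    exact this.intervalIntegrable
  have e3 : u (x + y) - u (x + 1) - (u y - u 1)
      = ∫ t in (1:ℝ)..y, (v (x + t) - v t) := by
    rw [e1, e2, intervalIntegral.integral_sub hint1 hint2]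
  have e4 : (∫ t in (1:ℝ)..y, (v (x + t) - v t))
      ≤ ∫ t in (1:ℝ)..y, C * (Real.log (x + t) - Real.log t) := by
    apply intervalIntegral.integral_mono_on hy (hint1.sub hint2)
    · exact (continuousOn_const.mul ((hlogc x hx0.le).sub (by
        have := hlogc 0 le_rfl
        simpa using this))).intervalIntegrable
    · intro t ht
      exact hvbound t (x + t) ht.1 (by linarith)
  have e5 : (∫ t in (1:ℝ)..y, C * (Real.log (x + t) - Real.log t))
      = C * (((x + y) * Real.log (x + y) - (x + 1) * Real.log (x + 1)
          - (x + y) + (x + 1))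
        - (y * Real.log y - 1 * Real.log 1 - y + 1)) := by
    rw [intervalIntegral.integral_const_mul]
    congr 1
    rw [intervalIntegral.integral_sub hintA hintB]
    congr 1
    · rw [intervalIntegral.integral_comp_add_left Real.log x]
      exact integral_log
    · exact integral_log
  have key1 : u (x + y) - u (x + 1) - (u y - u 1)
      ≤ ε / 2 * x + (C * Real.log (2 * C / ε) + C / 2) * y := by
    rw [e3]
    calc (∫ t in (1:ℝ)..y, (v (x + t) - v t))
        ≤ ∫ t in (1:ℝ)..y, C * (Real.log (x + t) - Real.log t) := e4
      _ = _ := e5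
      _ ≤ _ := stmt_2_alg C ε x y hC hε0 hεC hx hy
  have k2 := key2 x hx
  nlinarith [key1, k2, hy0, hC]
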